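/- Let θ(e^z) = (e^{z/2}-e^{-z/2})∏_{i≥1}(1-q^i e^z)(1-q^i e^{-z})/(1-q^i)². Then as formal power series in z, log(z/θ(e^z)) = 2∑_{k≥1} E_{2k}(q) z^{2k}/(2k)!, where E_{2k}(q) = ζ(1-2k)/2 + ∑_{n≥1} (∑_{d|n} d^{2k-1}) q^n. -/

import Mathlib

/-- The real odd theta function `θ(e^z)` for `0 < q < 1`. -/
noncomputable def thetaR (q z : ℝ) : ℝ :=
  (Real.exp (z / 2) - Real.exp (-z / 2)) *
    ∏' i : ℕ, ((1 - q ^ (i + 1) * Real.exp z) * (1 - q ^ (i + 1) * Real.exp (-z)) /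
      (1 - q ^ (i + 1)) ^ 2)

/-- The Eisenstein series `E_{2k}(q) = ζ(1-2k)/2 + ∑_{n≥1} σ_{2k-1}(n) q^n`,
using `ζ(1-2k) = -B_{2k}/(2k)`. -/
noncomputable def Eis (k : ℕ) (q : ℝ) : ℝ :=
  (-(bernoulli (2 * k) : ℝ) / (2 * k)) / 2 +
    ∑' n : ℕ, (∑ d ∈ (n + 1).divisors, (d : ℝ) ^ (2 * k - 1)) * q ^ (n + 1)

open Real Finset Filter Topology

lemma hasSum_exp_real (w : ℝ) : HasSum (fun n : ℕ => w ^ n / n.factorial) (Real.exp w) := by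
  rw [Real.exp_eq_exp_ℝ]; exact NormedSpace.expSeries_div_hasSum_exp w

lemma hasSum_cosh_sub (w : ℝ) :
    HasSum (fun k : ℕ => 2 * w ^ (2 * (k + 1)) / ((2 * (k + 1)).factorial : ℝ))
      (Real.exp w + Real.exp (-w) - 2) := by
  have h := (hasSum_exp_real w).add (hasSum_exp_real (-w))
  have heven : HasSum (fun k : ℕ => 2 * w ^ (2 * k) / ((2 * k).factorial : ℝ))
      (Real.exp w + Real.exp (-w)) := by
    have hinj : Function.Injective (fun k : ℕ => 2 * k) := fun a b hab => by
      simpa using hab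
    rw [← Function.Injective.hasSum_iff hinj (f := fun n : ℕ => w ^ n / n.factorial + (-w) ^ n / n.factorial)
      (fun n hn => ?_)] at h
    · refine h.congr_fun fun k => ?_
      simp only [Function.comp]
      rw [Even.neg_pow ⟨k, by ring⟩]
      ring
    · have hodd : Odd n := by
        rw [← Nat.not_even_iff_odd]
        simp only [Set.mem_range, not_exists] at hn
        intro ⟨c, hc⟩; exact hn c (by omega)
      show w ^ n / n.factorial + (-w) ^ n / n.factorial = 0
      rw [hodd.neg_pow]
      ring
  have := (hasSum_nat_add_iff' (f := fun k : ℕ => 2 * w ^ (2 * k) / ((2 * k).factorial : ℝ))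
      (g := Real.exp w + Real.exp (-w)) 1).2 heven
  simpa using this

lemma lambert (q : ℝ) (e : ℕ)
    (hsum : Summable (fun p : ℕ × ℕ => ((p.2 : ℝ) + 1) ^ e * q ^ ((p.1 + 1) * (p.2 + 1)))) :
    HasSum (fun p : ℕ × ℕ => ((p.2 : ℝ) + 1) ^ e * q ^ ((p.1 + 1) * (p.2 + 1)))
      (∑' n : ℕ, (∑ d ∈ (n + 1).divisors, (d : ℝ) ^ e) * q ^ (n + 1)) := by
  set W : ℕ × ℕ → ℝ := fun x => if x.2 ∈ (x.1 + 1).divisors then (x.2 : ℝ) ^ e * q ^ (x.1 + 1) else 0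
    with hWdef
  set j : ℕ × ℕ → ℕ × ℕ := fun p => ((p.1 + 1) * (p.2 + 1) - 1, p.2 + 1) with hjdef
  have hj : Function.Injective j := by
    rintro ⟨a, b⟩ ⟨c, d⟩ h
    simp only [hjdef, Prod.mk.injEq] at h
    obtain ⟨h1, h2⟩ := h
    have hb : b = d := by omega
    subst hb
    have : (a + 1) * (b + 1) = (c + 1) * (b + 1) := by
      have ha : 1 ≤ (a + 1) * (b + 1) := Nat.one_le_iff_ne_zero.2 (by positivity)
      have hc : 1 ≤ (c + 1) * (b + 1) := Nat.one_le_iff_ne_zero.2 (by positivity)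
      omega
    have := Nat.eq_of_mul_eq_mul_right (Nat.succ_pos b) this
    simp_all
  have hvan : ∀ x ∉ Set.range j, W x = 0 := by
    rintro ⟨n, d⟩ hx
    by_contra h
    have hd : d ∈ (n + 1).divisors := by
      by_contra hd; exact h (if_neg hd)
    have hd1 : 1 ≤ d := Nat.pos_of_mem_divisors hd
    rw [Nat.mem_divisors] at hd
    obtain ⟨hdvd, _⟩ := hd
    apply hx
    refine ⟨((n + 1) / d - 1, d - 1), ?_⟩
    have hdiv : 1 ≤ (n + 1) / d := Nat.one_le_div_iff (by omega) |>.2 (Nat.le_of_dvd (by omega) hdvd)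
    simp only [hjdef, Prod.mk.injEq]
    constructor
    · have : ((n + 1) / d - 1 + 1) * (d - 1 + 1) = (n + 1) / d * d := by
        congr 1 <;> omega
      rw [this, Nat.div_mul_cancel hdvd]; omega
    · omega
  have hcomp : (W ∘ j) = fun p : ℕ × ℕ => ((p.2 : ℝ) + 1) ^ e * q ^ ((p.1 + 1) * (p.2 + 1)) := by
    funext ⟨i, m⟩
    have hge : 1 ≤ (i + 1) * (m + 1) := Nat.one_le_iff_ne_zero.2 (by positivity)
    have hmem : m + 1 ∈ ((i + 1) * (m + 1) - 1 + 1).divisors := by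
      rw [Nat.sub_add_cancel hge, Nat.mem_divisors]
      exact ⟨dvd_mul_left _ _, by positivity⟩
    simp only [Function.comp, hjdef, hWdef, if_pos hmem]
    rw [Nat.sub_add_cancel hge]
    push_cast
    ring
  have hW : Summable W := by
    rw [← Function.Injective.summable_iff hj hvan]
    rw [hcomp]; exact hsum
  have hfib : ∀ n : ℕ, HasSum (fun d => W (n, d))
      ((∑ d ∈ (n + 1).divisors, (d : ℝ) ^ e) * q ^ (n + 1)) := by
    intro n
    have h1 : HasSum (fun d => W (n, d)) (∑ d ∈ (n + 1).divisors, W (n, d)) :=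
      hasSum_sum_of_ne_finset_zero (fun d hd => if_neg hd)
    convert h1 using 1
    rw [Finset.sum_mul]
    exact (Finset.sum_congr rfl fun d hd => (if_pos hd).symm)
  have hval : HasSum (fun n : ℕ => (∑ d ∈ (n + 1).divisors, (d : ℝ) ^ e) * q ^ (n + 1)) (∑' x, W x) :=
    HasSum.prod_fiberwise hW.hasSum hfib
  rw [hval.tsum_eq]
  have := (Function.Injective.hasSum_iff hj hvan).2 hW.hasSum
  rwa [hcomp] at this

lemma cosh_sub_nonneg (w : ℝ) : 0 ≤ Real.exp w + Real.exp (-w) - 2 := by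
  have h1 : Real.exp (w/2) * Real.exp (w/2) = Real.exp w := by
    rw [← Real.exp_add]; ring_nf
  have h2 : Real.exp (-(w/2)) * Real.exp (-(w/2)) = Real.exp (-w) := by
    rw [← Real.exp_add]; ring_nf
  have h3 : Real.exp (w/2) * Real.exp (-(w/2)) = 1 := by
    rw [← Real.exp_add]; simp
  nlinarith [sq_nonneg (Real.exp (w/2) - Real.exp (-(w/2)))]

lemma partB (q z : ℝ) (h0 : 0 < q) (h1 : q < 1) (hz : z ≠ 0) (hρ : q * Real.exp |z| < 1) :
    Summable (fun i : ℕ => Real.log ((1 - q ^ (i + 1) * Real.exp z) *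
        (1 - q ^ (i + 1) * Real.exp (-z)) / (1 - q ^ (i + 1)) ^ 2)) ∧
    HasSum (fun k : ℕ => 2 * (∑' n : ℕ, (∑ d ∈ (n + 1).divisors, (d : ℝ) ^ (2 * k + 1)) *
          q ^ (n + 1)) * z ^ (2 * (k + 1)) / ((2 * (k + 1)).factorial : ℝ))
      (- ∑' i : ℕ, Real.log ((1 - q ^ (i + 1) * Real.exp z) *
        (1 - q ^ (i + 1) * Real.exp (-z)) / (1 - q ^ (i + 1)) ^ 2)) := by
  set ρ : ℝ := q * Real.exp |z| with hρdef
  have hρ0 : 0 < ρ := mul_pos h0 (Real.exp_pos _)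
  set L : ℕ → ℝ := fun i => Real.log ((1 - q ^ (i + 1) * Real.exp z) *
      (1 - q ^ (i + 1) * Real.exp (-z)) / (1 - q ^ (i + 1)) ^ 2) with hLdef
  set G : ℕ × ℕ → ℝ := fun p => q ^ ((p.1 + 1) * (p.2 + 1)) / ((p.2 : ℝ) + 1) *
      (Real.exp (((p.2 : ℝ) + 1) * z) + Real.exp (-(((p.2 : ℝ) + 1) * z)) - 2) with hGdef
  -- basic bounds
  have hqpow : ∀ i : ℕ, q ^ (i + 1) ≤ q := by
    intro i
    calc q ^ (i + 1) ≤ q ^ 1 := pow_le_pow_of_le_one h0.le h1.le (by omega)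
    _ = q := pow_one q
  have hqpow0 : ∀ i : ℕ, 0 < q ^ (i + 1) := fun i => pow_pos h0 _
  have hxle : ∀ i : ℕ, q ^ (i + 1) * Real.exp |z| ≤ ρ := fun i =>
    mul_le_mul_of_nonneg_right (hqpow i) (Real.exp_pos _).le
  have hxlt : ∀ i : ℕ, q ^ (i + 1) * Real.exp |z| < 1 := fun i => lt_of_le_of_lt (hxle i) hρ
  have hexpz : Real.exp z ≤ Real.exp |z| := Real.exp_le_exp.2 (le_abs_self z)
  have hexpnz : Real.exp (-z) ≤ Real.exp |z| := Real.exp_le_exp.2 (neg_le_abs z)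
  have hAlt : ∀ i : ℕ, q ^ (i + 1) * Real.exp z < 1 := fun i =>
    lt_of_le_of_lt (mul_le_mul_of_nonneg_left hexpz (hqpow0 i).le) (hxlt i)
  have hBlt : ∀ i : ℕ, q ^ (i + 1) * Real.exp (-z) < 1 := fun i =>
    lt_of_le_of_lt (mul_le_mul_of_nonneg_left hexpnz (hqpow0 i).le) (hxlt i)
  have hClt : ∀ i : ℕ, q ^ (i + 1) < 1 := fun i => lt_of_le_of_lt (hqpow i) h1
  -- B1 : fiberwise sum over m
  have hB1 : ∀ i : ℕ, HasSum (fun m => G (i, m)) (-L i) := by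
    intro i
    have abs1 : |q ^ (i + 1) * Real.exp z| < 1 := by
      rw [abs_of_pos (mul_pos (hqpow0 i) (Real.exp_pos _))]; exact hAlt i
    have abs2 : |q ^ (i + 1) * Real.exp (-z)| < 1 := by
      rw [abs_of_pos (mul_pos (hqpow0 i) (Real.exp_pos _))]; exact hBlt i
    have abs3 : |q ^ (i + 1)| < 1 := by
      rw [abs_of_pos (hqpow0 i)]; exact hClt i
    have h₁ := Real.hasSum_pow_div_log_of_abs_lt_one abs1
    have h₂ := Real.hasSum_pow_div_log_of_abs_lt_one abs2
    have h₃ := (Real.hasSum_pow_div_log_of_abs_lt_one abs3).mul_left (-2)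
    have hsum := (h₁.add h₂).add h₃
    have hfun : ∀ m : ℕ,
        (q ^ (i + 1) * Real.exp z) ^ (m + 1) / ((m : ℝ) + 1) +
          (q ^ (i + 1) * Real.exp (-z)) ^ (m + 1) / ((m : ℝ) + 1) +
          -2 * ((q ^ (i + 1)) ^ (m + 1) / ((m : ℝ) + 1)) = G (i, m) := by
      intro m
      have e1 : Real.exp z ^ (m + 1) = Real.exp (((m : ℝ) + 1) * z) := by
        rw [← Real.exp_nat_mul]; push_cast; ring_nf
      have e2 : Real.exp (-z) ^ (m + 1) = Real.exp (-(((m : ℝ) + 1) * z)) := by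
        rw [← Real.exp_nat_mul]; push_cast; ring_nf
      have e3 : (q ^ (i + 1)) ^ (m + 1) = q ^ ((i + 1) * (m + 1)) := by rw [← pow_mul]
      simp only [hGdef, mul_pow, e1, e2, e3]
      have : ((m : ℝ) + 1) ≠ 0 := by positivity
      field_simp
      ring
    have hval : -L i = -Real.log (1 - q ^ (i + 1) * Real.exp z) +
        -Real.log (1 - q ^ (i + 1) * Real.exp (-z)) +
        -2 * -Real.log (1 - q ^ (i + 1)) := by
      have p1 : (0:ℝ) < 1 - q ^ (i + 1) * Real.exp z := by linarith [hAlt i]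
      have p2 : (0:ℝ) < 1 - q ^ (i + 1) * Real.exp (-z) := by linarith [hBlt i]
      have p3 : (0:ℝ) < 1 - q ^ (i + 1) := by linarith [hClt i]
      simp only [hLdef]
      rw [Real.log_div (by positivity) (by positivity), Real.log_mul p1.ne' p2.ne',
        Real.log_pow]
      push_cast
      ring
    rw [hval]
    exact hsum.congr_fun fun m => (hfun m).symm
  -- nonnegativity of G
  have hGnonneg : ∀ p : ℕ × ℕ, 0 ≤ G p := by
    intro ⟨i, m⟩
    apply mul_nonneg
    · positivity
    · exact cosh_sub_nonneg _
  -- geometric bound for the fiber sums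
  have hfibbound : ∀ i : ℕ, -L i ≤ 2 / (1 - ρ) * (ρ * q ^ i) := by
    intro i
    set x : ℝ := q ^ (i + 1) * Real.exp |z| with hxdef
    have hx0 : 0 < x := mul_pos (hqpow0 i) (Real.exp_pos _)
    have hx1 : x < 1 := hxlt i
    have hgeo : HasSum (fun m : ℕ => 2 * x ^ (m + 1)) (2 * (x * (1 - x)⁻¹)) := by
      have h := (hasSum_geometric_of_lt_one hx0.le hx1).mul_left (2 * x)
      rw [mul_assoc] at h
      refine h.congr_fun fun m => ?_
      rw [pow_succ']
      ring
    have hle : ∀ m : ℕ, G (i, m) ≤ 2 * x ^ (m + 1) := by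
      intro m
      have hm1 : (1:ℝ) ≤ (m : ℝ) + 1 := by push_cast; linarith [Nat.cast_nonneg (α := ℝ) m]
      have hw : Real.exp (((m : ℝ) + 1) * z) + Real.exp (-(((m : ℝ) + 1) * z)) - 2 ≤
          2 * Real.exp (((m : ℝ) + 1) * |z|) := by
        have habs : |((m : ℝ) + 1) * z| = ((m : ℝ) + 1) * |z| := by
          rw [abs_mul, abs_of_nonneg (by linarith : (0:ℝ) ≤ (m:ℝ) + 1)]
        have l1 : Real.exp (((m : ℝ) + 1) * z) ≤ Real.exp (((m : ℝ) + 1) * |z|) :=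
          Real.exp_le_exp.2 (by rw [← habs]; exact le_abs_self _)
        have l2 : Real.exp (-(((m : ℝ) + 1) * z)) ≤ Real.exp (((m : ℝ) + 1) * |z|) :=
          Real.exp_le_exp.2 (by rw [← habs]; exact neg_le_abs _)
        linarith [Real.exp_pos (((m : ℝ) + 1) * |z|)]
      have hq1 : q ^ ((i + 1) * (m + 1)) / ((m : ℝ) + 1) ≤ q ^ ((i + 1) * (m + 1)) := by
        apply div_le_self (by positivity) hm1
      have hexp_pow : Real.exp (((m : ℝ) + 1) * |z|) = Real.exp |z| ^ (m + 1) := by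
        rw [← Real.exp_nat_mul]; push_cast; ring_nf
      have hxpow : x ^ (m + 1) = q ^ ((i + 1) * (m + 1)) * Real.exp |z| ^ (m + 1) := by
        rw [hxdef, mul_pow, ← pow_mul]
      calc G (i, m) ≤ q ^ ((i + 1) * (m + 1)) * (2 * Real.exp (((m : ℝ) + 1) * |z|)) := by
            apply mul_le_mul hq1 hw (cosh_sub_nonneg _) (by positivity)
      _ = 2 * x ^ (m + 1) := by rw [hexp_pow, hxpow]; ring
    have := Summable.tsum_le_tsum hle (hB1 i).summable hgeo.summable
    rw [(hB1 i).tsum_eq, hgeo.tsum_eq] at this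
    refine this.trans ?_
    have hxρ : x = ρ * q ^ i := by rw [hxdef, hρdef, pow_succ]; ring
    have h1ρ : (0:ℝ) < 1 - ρ := by linarith
    have hinv : (1 - x)⁻¹ ≤ (1 - ρ)⁻¹ := inv_anti₀ h1ρ (by linarith [hxle i])
    have hm := mul_le_mul_of_nonneg_left hinv hx0.le
    calc 2 * (x * (1 - x)⁻¹) ≤ 2 * (x * (1 - ρ)⁻¹) := by linarith
    _ = 2 / (1 - ρ) * (ρ * q ^ i) := by rw [← hxρ]; ring
  have hnegLnonneg : ∀ i : ℕ, 0 ≤ -L i := by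
    intro i
    rw [← (hB1 i).tsum_eq]
    exact tsum_nonneg fun m => hGnonneg (i, m)
  have hsumnegL : Summable (fun i => -L i) := by
    have hgs : Summable (fun i : ℕ => 2 / (1 - ρ) * (ρ * q ^ i)) := by
      have h := (summable_geometric_of_lt_one h0.le h1).mul_left (2 / (1 - ρ) * ρ)
      refine h.congr fun i => by ring
    exact Summable.of_nonneg_of_le hnegLnonneg hfibbound hgs
  have hLsummable : Summable L := by simpa using hsumnegL.neg
  refine ⟨hLsummable, ?_⟩
  -- summability of G on the product
  have hGsum : Summable G := by
    rw [summable_prod_of_nonneg hGnonneg]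
    refine ⟨fun i => (hB1 i).summable, ?_⟩
    refine hsumnegL.congr fun i => ?_
    exact ((hB1 i).tsum_eq).symm
  have htsumG : ∑' p, G p = -∑' i, L i := by
    rw [Summable.tsum_prod' hGsum fun i => (hB1 i).summable]
    rw [← tsum_neg]
    exact tsum_congr fun i => (hB1 i).tsum_eq
  -- the triple sum
  set Φ : (ℕ × ℕ) × ℕ → ℝ := fun x => q ^ ((x.1.1 + 1) * (x.1.2 + 1)) / ((x.1.2 : ℝ) + 1) *
      (2 * (((x.1.2 : ℝ) + 1) * z) ^ (2 * (x.2 + 1)) / ((2 * (x.2 + 1)).factorial : ℝ)) with hΦdef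
  have hΦfib : ∀ p : ℕ × ℕ, HasSum (fun k => Φ (p, k)) (G p) := by
    intro p
    exact (hasSum_cosh_sub (((p.2 : ℝ) + 1) * z)).mul_left _
  have hΦnonneg : 0 ≤ Φ := by
    intro ⟨⟨i, m⟩, k⟩
    simp only [hΦdef]
    apply mul_nonneg (by positivity)
    rw [pow_mul]
    positivity
  have hΦsum : Summable Φ := by
    rw [summable_prod_of_nonneg hΦnonneg]
    refine ⟨fun p => (hΦfib p).summable, ?_⟩
    refine hGsum.congr fun p => ((hΦfib p).tsum_eq).symm
  have hΦswap : Summable (fun x : ℕ × (ℕ × ℕ) => Φ x.swap) := hΦsum.prod_symm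
  -- for each k, the (i,m)-sum gives the divisor sum
  have hc : ∀ k : ℕ, (0:ℝ) < 2 * z ^ (2 * (k + 1)) / ((2 * (k + 1)).factorial : ℝ) := by
    intro k
    have : (0:ℝ) < z ^ (2 * (k + 1)) := by
      rw [pow_mul]
      positivity
    positivity
  have hΦeq : ∀ k : ℕ, ∀ p : ℕ × ℕ, Φ (p, k) =
      ((p.2 : ℝ) + 1) ^ (2 * k + 1) * q ^ ((p.1 + 1) * (p.2 + 1)) *
        (2 * z ^ (2 * (k + 1)) / ((2 * (k + 1)).factorial : ℝ)) := by
    intro k ⟨i, m⟩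
    simp only [hΦdef]
    have hm : ((m : ℝ) + 1) ≠ 0 := by positivity
    have : (((m : ℝ) + 1) * z) ^ (2 * (k + 1)) =
        ((m : ℝ) + 1) ^ (2 * k + 1) * (((m : ℝ) + 1) * z ^ (2 * (k + 1))) := by
      rw [mul_pow]
      have : (2 * (k + 1)) = (2 * k + 1) + 1 := by omega
      rw [this, pow_succ]
      ring
    rw [this]
    field_simp
  have hkfib : ∀ k : ℕ, Summable (fun p : ℕ × ℕ =>
      ((p.2 : ℝ) + 1) ^ (2 * k + 1) * q ^ ((p.1 + 1) * (p.2 + 1))) := by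
    intro k
    have h := hΦswap.prod_factor k
    have h2 : Summable (fun p : ℕ × ℕ => Φ (p, k)) := h
    have h3 := h2.div_const (2 * z ^ (2 * (k + 1)) / ((2 * (k + 1)).factorial : ℝ))
    refine h3.congr fun p => ?_
    rw [hΦeq k p]
    field_simp
  have hkHasSum : ∀ k : ℕ, HasSum (fun p : ℕ × ℕ => Φ (p, k))
      ((∑' n : ℕ, (∑ d ∈ (n + 1).divisors, (d : ℝ) ^ (2 * k + 1)) * q ^ (n + 1)) *
        (2 * z ^ (2 * (k + 1)) / ((2 * (k + 1)).factorial : ℝ))) := by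
    intro k
    have := (lambert q (2 * k + 1) (hkfib k)).mul_right
      (2 * z ^ (2 * (k + 1)) / ((2 * (k + 1)).factorial : ℝ))
    refine this.congr_fun fun p => hΦeq k p
  -- assemble
  have hfinal : HasSum (fun k : ℕ =>
      (∑' n : ℕ, (∑ d ∈ (n + 1).divisors, (d : ℝ) ^ (2 * k + 1)) * q ^ (n + 1)) *
        (2 * z ^ (2 * (k + 1)) / ((2 * (k + 1)).factorial : ℝ))) (∑' x, Φ x) := by
    have hts : ∑' x : ℕ × (ℕ × ℕ), Φ x.swap = ∑' x, Φ x := by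
      simpa using (Equiv.prodComm ℕ (ℕ × ℕ)).tsum_eq (f := Φ)
    have htot : HasSum (fun x : ℕ × (ℕ × ℕ) => Φ x.swap) (∑' x, Φ x) := by
      rw [← hts]; exact hΦswap.hasSum
    exact htot.prod_fiberwise fun k => hkHasSum k
  have htsumΦ : ∑' x, Φ x = -∑' i, L i := by
    rw [Summable.tsum_prod' hΦsum fun p => (hΦfib p).summable]
    rw [← htsumG]
    exact tsum_congr fun p => (hΦfib p).tsum_eq
  rw [htsumΦ] at hfinal
  exact hfinal.congr_fun fun k => by ring

lemma partA (z : ℝ) (hz0 : 0 < z) (hz1 : z < 1) :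
    HasSum (fun k : ℕ => (bernoulli (2 * (k + 1)) : ℝ) / (2 * (k + 1)) * z ^ (2 * (k + 1)) /
        ((2 * (k + 1)).factorial : ℝ))
      (Real.log ((Real.exp (z / 2) - Real.exp (-z / 2)) / z)) := by
  have hπ : (0:ℝ) < π := Real.pi_pos
  have h2π : (1:ℝ) < 2 * π := by nlinarith [Real.pi_gt_three]
  obtain ⟨u, hudef⟩ : ∃ u : ℝ, u = z / (2 * π) := ⟨_, rfl⟩
  have hu0 : 0 < u := by rw [hudef]; positivity
  have hu1 : u < 1 := by
    rw [hudef, div_lt_one (by positivity)]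
    linarith
  have hu2 : u ^ 2 < 1 := by nlinarith
  obtain ⟨x, hxdef⟩ : ∃ x : ℕ → ℝ, ∀ j : ℕ, x j = u ^ 2 / ((j : ℝ) + 1) ^ 2 := ⟨_, fun _ => rfl⟩
  have hx0 : ∀ j, 0 < x j := by
    intro j
    simp only [hxdef]
    positivity
  have hxle : ∀ j, x j ≤ u ^ 2 := by
    intro j
    simp only [hxdef]
    apply div_le_self (by positivity)
    nlinarith [Nat.cast_nonneg (α := ℝ) j]
  have hx1 : ∀ j, x j < 1 := fun j => lt_of_le_of_lt (hxle j) hu2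
  -- summability of x
  have hsummx : Summable x := by
    have h := (hasSum_zeta_nat one_ne_zero).summable
    rw [← summable_nat_add_iff 1] at h
    have := h.mul_left (u ^ 2)
    refine this.congr fun j => ?_
    simp only [hxdef]
    push_cast
    rw [mul_one_div]
  -- summability of logs
  have hlognn : ∀ j, 0 ≤ Real.log (1 + x j) := fun j =>
    Real.log_nonneg (by linarith [hx0 j])
  have hlogle : ∀ j, Real.log (1 + x j) ≤ x j := by
    intro j
    have := Real.log_le_sub_one_of_pos (show (0:ℝ) < 1 + x j by linarith [hx0 j])
    linarith
  have hS : Summable fun j => Real.log (1 + x j) :=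
    Summable.of_nonneg_of_le hlognn hlogle hsummx
  set S : ℝ := ∑' j, Real.log (1 + x j) with hSdef
  -- infinite product = exp S
  have hprod : HasProd (fun j => 1 + x j) (Real.exp S) := by
    have h := hS.hasSum.rexp
    have heq : (Real.exp ∘ fun j => Real.log (1 + x j)) = fun j => 1 + x j :=
      funext fun j => Real.exp_log (by linarith [hx0 j])
    rwa [heq] at h
  set P : ℕ → ℝ := fun n => ∏ j ∈ Finset.range n, (1 + x j) with hPdef
  have htendA : Tendsto P atTop (𝓝 (Real.exp S)) := hprod.tendsto_prod_nat
  -- Euler sine product at u * I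
  have hzu : π * u = z / 2 := by
    rw [hudef]; field_simp
  have hc := Complex.tendsto_euler_sin_prod (↑u * Complex.I)
  have hlim : Complex.sin (↑π * (↑u * Complex.I)) = ↑(Real.sinh (z / 2)) * Complex.I := by
    have h : (↑π * (↑u * Complex.I)) = (↑(z / 2) : ℂ) * Complex.I := by
      rw [← mul_assoc, ← Complex.ofReal_mul, hzu]
    rw [h, Complex.sin_mul_I, Complex.ofReal_sinh]
  rw [hlim] at hc
  have hseq : ∀ n : ℕ, (↑π * (↑u * Complex.I) *
      ∏ j ∈ Finset.range n, (1 - (↑u * Complex.I) ^ 2 / ((j : ℂ) + 1) ^ 2))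
      = (↑(z / 2) : ℂ) * Complex.I * ↑(P n) := by
    intro n
    rw [hPdef, Complex.ofReal_prod]
    have h1 : (↑π * (↑u * Complex.I)) = (↑(z / 2) : ℂ) * Complex.I := by
      rw [← mul_assoc, ← Complex.ofReal_mul, hzu]
    rw [h1]
    congr 1
    refine Finset.prod_congr rfl fun j _ => ?_
    have : ((↑u : ℂ) * Complex.I) ^ 2 = -(↑(u ^ 2) : ℂ) := by
      rw [mul_pow, Complex.I_sq]
      push_cast
      ring
    rw [this]
    simp only [hxdef]
    push_cast
    ring
  have hc2 : Tendsto (fun n => (↑(z / 2) : ℂ) * Complex.I * ↑(P n)) atTop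
      (𝓝 (↑(Real.sinh (z / 2)) * Complex.I)) := Tendsto.congr hseq hc
  have h1 : Tendsto (fun n => (↑(P n) : ℂ)) atTop (𝓝 ↑(Real.exp S)) :=
    (Complex.continuous_ofReal.tendsto _).comp htendA
  have h2 : Tendsto (fun n => (↑(z / 2) : ℂ) * Complex.I * ↑(P n)) atTop
      (𝓝 ((↑(z / 2) : ℂ) * Complex.I * ↑(Real.exp S))) := h1.const_mul _
  have huniq : (↑(z / 2) : ℂ) * Complex.I * ↑(Real.exp S) = ↑(Real.sinh (z / 2)) * Complex.I :=
    tendsto_nhds_unique h2 hc2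
  have hkey : z / 2 * Real.exp S = Real.sinh (z / 2) := by
    have h3 : ((↑(z / 2 * Real.exp S - Real.sinh (z / 2)) : ℂ)) * Complex.I = 0 := by
      rw [Complex.ofReal_sub, Complex.ofReal_mul]
      linear_combination huniq
    rcases mul_eq_zero.1 h3 with h | h
    · have := Complex.ofReal_eq_zero.1 h
      linarith
    · exact absurd h Complex.I_ne_zero
  -- value of the log
  have hlogval : Real.log ((Real.exp (z / 2) - Real.exp (-z / 2)) / z) = S := by
    have hsinh : Real.exp (z / 2) - Real.exp (-z / 2) = z * Real.exp S := by
      have hse := Real.sinh_eq (z / 2)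
      have hneg : -z / 2 = -(z / 2) := by ring
      rw [hneg]
      linear_combination (-2 : ℝ) * hkey + (-2 : ℝ) * hse
    rw [hsinh, show z * Real.exp S / z = Real.exp S from by field_simp, Real.log_exp]
  rw [hlogval]
  -- now the double series
  set Ψ : ℕ × ℕ → ℝ := fun p => (-1 : ℝ) ^ p.2 * x p.1 ^ (p.2 + 1) / ((p.2 : ℝ) + 1) with hΨdef
  have hΨfib : ∀ j, HasSum (fun m => Ψ (j, m)) (Real.log (1 + x j)) := by
    intro j
    have habs : |(-(x j))| < 1 := by
      rw [abs_neg, abs_of_pos (hx0 j)]; exact hx1 j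
    have h := (Real.hasSum_pow_div_log_of_abs_lt_one habs).neg
    have heq : (1 : ℝ) - -x j = 1 + x j := by ring
    rw [heq, neg_neg] at h
    refine h.congr_fun fun m => ?_
    show (-1:ℝ) ^ m * x j ^ (m + 1) / ((m:ℝ) + 1) = -((-x j) ^ (m + 1) / ((m:ℝ) + 1))
    generalize x j = y
    rw [neg_pow, pow_succ]
    ring
  have hΨabs : Summable fun p : ℕ × ℕ => |Ψ p| := by
    have hb : Summable (fun p : ℕ × ℕ => x p.1 * (u ^ 2) ^ p.2) :=
      Summable.mul_of_nonneg hsummx (summable_geometric_of_lt_one (by positivity) hu2)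
        (fun j => (hx0 j).le) (fun m => by positivity)
    refine Summable.of_nonneg_of_le (fun p => abs_nonneg _) (fun p => ?_) hb
    obtain ⟨j, m⟩ := p
    have h1 : |Ψ (j, m)| = x j ^ (m + 1) / ((m : ℝ) + 1) := by
      rw [hΨdef]
      simp only
      rw [abs_div]
      congr 1
      · rw [abs_mul, abs_pow, abs_pow, abs_neg, abs_one, one_pow, one_mul,
          abs_of_pos (hx0 j)]
      · rw [abs_of_pos (by positivity : (0:ℝ) < (m : ℝ) + 1)]
    rw [h1]
    have h2 : x j ^ (m + 1) / ((m : ℝ) + 1) ≤ x j ^ (m + 1) :=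
      div_le_self (pow_nonneg (hx0 j).le _) (by push_cast; linarith [Nat.cast_nonneg (α := ℝ) m])
    refine h2.trans ?_
    rw [pow_succ']
    apply mul_le_mul_of_nonneg_left _ (hx0 j).le
    exact pow_le_pow_left₀ (hx0 j).le (hxle j) m
  have hΨ : Summable Ψ := hΨabs.of_abs
  have htsumΨ : ∑' p, Ψ p = S := by
    rw [Summable.tsum_prod' hΨ fun j => (hΨfib j).summable, hSdef]
    exact tsum_congr fun j => (hΨfib j).tsum_eq
  -- column sums via zeta values
  have hcol : ∀ m : ℕ, HasSum (fun j => Ψ (j, m))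
      ((-1 : ℝ) ^ m * u ^ (2 * (m + 1)) / ((m : ℝ) + 1) *
        ((-1 : ℝ) ^ (m + 1 + 1) * 2 ^ (2 * (m + 1) - 1) * π ^ (2 * (m + 1)) *
          (bernoulli (2 * (m + 1)) : ℝ) / ((2 * (m + 1)).factorial : ℝ))) := by
    intro m
    have hz := hasSum_zeta_nat (k := m + 1) (Nat.succ_ne_zero m)
    have hshift := (hasSum_nat_add_iff' (f := fun n : ℕ => 1 / (n : ℝ) ^ (2 * (m + 1))) 1).2 hz
    simp only [Finset.range_one, Finset.sum_singleton, Nat.cast_zero] at hshift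
    rw [zero_pow (by omega), div_zero, sub_zero] at hshift
    have h := hshift.mul_left ((-1 : ℝ) ^ m * u ^ (2 * (m + 1)) / ((m : ℝ) + 1))
    refine h.congr_fun fun j => ?_
    rw [hΨdef]
    simp only
    have hxpow : x j ^ (m + 1) = u ^ (2 * (m + 1)) / ((j : ℝ) + 1) ^ (2 * (m + 1)) := by
      simp only [hxdef]
      rw [div_pow, ← pow_mul, ← pow_mul, mul_comm 2 (m + 1), mul_comm (m + 1) 2]
    rw [hxpow]
    push_cast
    have hj : ((j : ℝ) + 1) ^ (2 * (m + 1)) ≠ 0 := by positivity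
    field_simp
  -- swap the order of summation
  have hswapsum : HasSum (fun m : ℕ =>
      ((-1 : ℝ) ^ m * u ^ (2 * (m + 1)) / ((m : ℝ) + 1) *
        ((-1 : ℝ) ^ (m + 1 + 1) * 2 ^ (2 * (m + 1) - 1) * π ^ (2 * (m + 1)) *
          (bernoulli (2 * (m + 1)) : ℝ) / ((2 * (m + 1)).factorial : ℝ)))) S := by
    have hts : ∑' p : ℕ × ℕ, Ψ p.swap = ∑' p, Ψ p := by
      simpa using (Equiv.prodComm ℕ ℕ).tsum_eq (f := Ψ)
    have htot : HasSum (fun p : ℕ × ℕ => Ψ p.swap) S := by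
      have := hΨ.prod_symm.hasSum
      rwa [hts, htsumΨ] at this
    exact htot.prod_fiberwise fun m => hcol m
  -- simplify the coefficients
  refine hswapsum.congr_fun fun m => ?_
  have hsignr : ((-1 : ℝ)) ^ (m + 1 + 1) = (-1 : ℝ) ^ m := by
    rw [show m + 1 + 1 = m + 2 from rfl, pow_add]
    norm_num
  have ha : ((-1 : ℝ)) ^ m * (-1 : ℝ) ^ m = 1 := by
    rw [← pow_add, ← two_mul, pow_mul]
    norm_num
  have hz2 : z ^ (2 * (m + 1)) = u ^ (2 * (m + 1)) * (2 * π) ^ (2 * (m + 1)) := by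
    rw [← mul_pow]
    congr 1
    rw [hudef]
    field_simp
  have h2pi : ((2 * π) : ℝ) ^ (2 * (m + 1)) = 2 ^ (2 * (m + 1)) * π ^ (2 * (m + 1)) :=
    mul_pow 2 π _
  have e2 : (2 : ℝ) ^ (2 * (m + 1) - 1) = 2 ^ (2 * (m + 1)) / 2 := by
    rw [eq_div_iff (two_ne_zero (α := ℝ)), ← pow_succ]
    congr 1
  have hfact : ((2 * (m + 1)).factorial : ℝ) ≠ 0 := Nat.cast_ne_zero.2 (Nat.factorial_ne_zero _)
  have hm1 : ((m : ℝ) + 1) ≠ 0 := by positivity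
  have hπpow : (π : ℝ) ^ (2 * (m + 1)) ≠ 0 := by positivity
  rw [hsignr]
  have expand : ((-1:ℝ)^m * u ^ (2 * (m + 1)) / ((m : ℝ) + 1)) *
      ((-1:ℝ)^m * 2 ^ (2 * (m + 1) - 1) * π ^ (2 * (m + 1)) * (bernoulli (2 * (m + 1)) : ℝ) /
        ((2 * (m + 1)).factorial : ℝ))
      = ((-1:ℝ)^m * (-1:ℝ)^m) * (u ^ (2 * (m + 1)) * 2 ^ (2 * (m + 1) - 1) * π ^ (2 * (m + 1)) *
          (bernoulli (2 * (m + 1)) : ℝ) / (((m : ℝ) + 1) * ((2 * (m + 1)).factorial : ℝ))) := by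
    field_simp [hm1, hfact]
  rw [expand, ha, one_mul, e2, hz2, h2pi]
  field_simp

lemma key (q z : ℝ) (h0 : 0 < q) (h1 : q < 1) (hz0 : 0 < z) (hz1 : z < 1)
    (hq : q * Real.exp z < 1) :
    Real.log (z / thetaR q z) =
      2 * ∑' k : ℕ, Eis (k + 1) q * z ^ (2 * (k + 1)) / ((2 * (k + 1)).factorial : ℝ) := by
  have hρ : q * Real.exp |z| < 1 := by rwa [abs_of_pos hz0]
  obtain ⟨hLsum, hB⟩ := partB q z h0 h1 hz0.ne' hρ
  have hA := partA z hz0 hz1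
  -- positivity facts
  have hqpow : ∀ i : ℕ, q ^ (i + 1) ≤ q := by
    intro i
    calc q ^ (i + 1) ≤ q ^ 1 := pow_le_pow_of_le_one h0.le h1.le (by omega)
    _ = q := pow_one q
  have hgpos : ∀ i : ℕ, 0 < (1 - q ^ (i + 1) * Real.exp z) *
      (1 - q ^ (i + 1) * Real.exp (-z)) / (1 - q ^ (i + 1)) ^ 2 := by
    intro i
    have hp : 0 < q ^ (i + 1) := pow_pos h0 _
    have h1' : q ^ (i + 1) * Real.exp z < 1 :=
      lt_of_le_of_lt (mul_le_mul_of_nonneg_right (hqpow i) (Real.exp_pos _).le) hq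
    have h2' : q ^ (i + 1) * Real.exp (-z) < 1 := by
      have : Real.exp (-z) < Real.exp z := Real.exp_lt_exp.2 (by linarith)
      nlinarith
    have h3' : q ^ (i + 1) < 1 := lt_of_le_of_lt (hqpow i) h1
    have : (0:ℝ) < (1 - q ^ (i + 1)) ^ 2 := pow_pos (by linarith) 2
    apply div_pos (mul_pos (by linarith) (by linarith)) this
  -- the infinite product is exp of the sum of logs
  set Lsum : ℝ := ∑' i : ℕ, Real.log ((1 - q ^ (i + 1) * Real.exp z) *
      (1 - q ^ (i + 1) * Real.exp (-z)) / (1 - q ^ (i + 1)) ^ 2) with hLdef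
  have hprod : HasProd (fun i : ℕ => (1 - q ^ (i + 1) * Real.exp z) *
      (1 - q ^ (i + 1) * Real.exp (-z)) / (1 - q ^ (i + 1)) ^ 2) (Real.exp Lsum) := by
    have h := hLsum.hasSum.rexp
    have heq : (Real.exp ∘ fun i : ℕ => Real.log ((1 - q ^ (i + 1) * Real.exp z) *
        (1 - q ^ (i + 1) * Real.exp (-z)) / (1 - q ^ (i + 1)) ^ 2)) =
        fun i : ℕ => (1 - q ^ (i + 1) * Real.exp z) *
        (1 - q ^ (i + 1) * Real.exp (-z)) / (1 - q ^ (i + 1)) ^ 2 :=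
      funext fun i => Real.exp_log (hgpos i)
    rwa [heq] at h
  have hE : 0 < Real.exp (z / 2) - Real.exp (-z / 2) := by
    have : Real.exp (-z / 2) < Real.exp (z / 2) := Real.exp_lt_exp.2 (by linarith)
    linarith
  have hθ : thetaR q z = (Real.exp (z / 2) - Real.exp (-z / 2)) * Real.exp Lsum := by
    rw [thetaR, hprod.tprod_eq]
  have hlogθ : Real.log (z / thetaR q z) =
      -Real.log ((Real.exp (z / 2) - Real.exp (-z / 2)) / z) + -Lsum := by
    rw [hθ, Real.log_div hz0.ne' (by positivity),
      Real.log_mul hE.ne' (Real.exp_pos _).ne', Real.log_exp,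
      Real.log_div hE.ne' hz0.ne']
    ring
  rw [hlogθ]
  have hsum := (hA.neg).add hB
  rw [← tsum_mul_left]
  refine (hsum.congr_fun fun k => ?_).tsum_eq.symm
  show 2 * (Eis (k + 1) q * z ^ (2 * (k + 1)) / ((2 * (k + 1)).factorial : ℝ)) = _
  simp only [Eis]
  rw [show 2 * (k + 1) - 1 = 2 * k + 1 from by omega]
  push_cast
  ring


theorem stmt9 (q : ℝ) (h0 : 0 < q) (h1 : q < 1) :
    ∃ r > (0 : ℝ), ∀ z : ℝ, z ≠ 0 → |z| < r →
      Real.log (z / thetaR q z) =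
        2 * ∑' k : ℕ, Eis (k + 1) q * z ^ (2 * (k + 1)) / ((2 * (k + 1)).factorial : ℝ) := by
  refine ⟨min 1 (Real.log (1/q)), ?_, ?_⟩
  · have h1q : (1:ℝ) < 1/q := by rw [lt_div_iff₀ h0]; linarith
    exact lt_min one_pos (Real.log_pos h1q)
  · intro z hz hzr
    have hz1 : |z| < 1 := lt_of_lt_of_le hzr (min_le_left _ _)
    have hzlog : |z| < Real.log (1/q) := lt_of_lt_of_le hzr (min_le_right _ _)
    have hqexp : q * Real.exp |z| < 1 := by
      have h1q : (0:ℝ) < 1/q := by positivity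
      have hh := Real.exp_lt_exp.2 hzlog
      rw [Real.exp_log h1q] at hh
      calc q * Real.exp |z| < q * (1/q) := by nlinarith [Real.exp_pos |z|]
      _ = 1 := by field_simp
    rcases hz.lt_or_gt with hneg | hpos
    · have habs : |z| = -z := abs_of_neg hneg
      have hk := key q (-z) h0 h1 (by linarith) (by rw [habs] at hz1; linarith)
        (by rwa [habs] at hqexp)
      have hθ : thetaR q (-z) = - thetaR q z := by
        rw [thetaR, thetaR]
        have h1' : Real.exp (-z/2) - Real.exp (-(-z)/2) =
            -(Real.exp (z/2) - Real.exp (-z/2)) := by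
          rw [neg_neg]; ring
        have h2' : (∏' i : ℕ, ((1 - q ^ (i+1) * Real.exp (-z)) *
            (1 - q ^ (i+1) * Real.exp (-(-z))) / (1 - q^(i+1))^2)) =
            ∏' i : ℕ, ((1 - q ^ (i+1) * Real.exp z) *
            (1 - q ^ (i+1) * Real.exp (-z)) / (1 - q^(i+1))^2) :=
          tprod_congr fun i => by rw [neg_neg]; ring
        rw [h1', h2']
        ring
      have hdiv : (-z) / thetaR q (-z) = z / thetaR q z := by
        rw [hθ, neg_div_neg_eq]
      rw [hdiv] at hk
      rw [hk]
      congr 1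
      exact tsum_congr fun k => by rw [Even.neg_pow ⟨k+1, by ring⟩]
    · have habs : |z| = z := abs_of_pos hpos
      exact key q z h0 h1 hpos (habs ▸ hz1) (by rwa [habs] at hqexp)
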